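/- For every s, v ∈ V with v ≠ s: Δ_{s•}(v) = Σ_{w : v ∈ P_s(w) and w ∈ T(s)} (σ_{sv}/σ_{sw}) · (1 + Δ_{s•}(w)) + Σ_{w : v ∈ P_s(w) and w ∉ T(s)} (σ_{sv}/σ_{sw}) · Δ_{s•}(w). -/

import Mathlib

open scoped BigOperators

/-- A directed graph on vertex set `V` with positive real edge weights. -/
structure WDigraph (V : Type*) where
  /-- the edge relation -/
  E : V → V → Prop
  /-- the edge weights -/
  w : V → V → ℝ
  /-- weights of edges are positive -/
  pos : ∀ a b, E a b → 0 < w a b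

namespace WDigraph

variable {V : Type*} [Fintype V] [DecidableEq V]

/-- `p` is a simple path from `s` to `t` in `G`: a nonempty list of pairwise
distinct vertices starting at `s`, ending at `t`, consecutive vertices joined
by edges. (Since all weights are positive, every shortest path is simple, so
it suffices to consider simple paths throughout.) -/
def IsPath (G : WDigraph V) (s t : V) (p : List V) : Prop :=
  List.Chain' G.E p ∧ p.head? = some s ∧ p.getLast? = some t ∧ p.Nodup

/-- The total weight of a list of vertices (sum of the weights of consecutive pairs). -/
def pw (G : WDigraph V) : List V → ℝ
  | [] => 0
  | [_] => 0
  | a :: b :: r => G.w a b + G.pw (b :: r)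

/-- `d(s,t)`: shortest-path distance from `s` to `t`, equal to `⊤` (infinity)
if `t` is unreachable from `s`. -/
noncomputable def dist (G : WDigraph V) (s t : V) : EReal :=
  sInf ((fun p => (G.pw p : EReal)) '' {p | G.IsPath s t p})

/-- The set of shortest `s`-`t` paths in `G`. -/
def SP (G : WDigraph V) (s t : V) : Set (List V) :=
  {p | G.IsPath s t p ∧ (G.pw p : EReal) = G.dist s t}

/-- `σ_{st}`: the number of shortest `s`-`t` paths in `G`. -/
noncomputable def sigma (G : WDigraph V) (s t : V) : ℕ :=
  (G.SP s t).ncard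

/-- `σ_{st}(v)`: the number of shortest `s`-`t` paths in `G` that contain `v`. -/
noncomputable def sigmaV (G : WDigraph V) (s t v : V) : ℕ :=
  {p ∈ G.SP s t | v ∈ p}.ncard

/-- `σ_{st}(v,w)`: the number of shortest `s`-`t` paths in `G` using the edge `(v,w)`. -/
noncomputable def sigmaE (G : WDigraph V) (s t v w : V) : ℕ :=
  {p ∈ G.SP s t | [v, w] <:+: p}.ncard

/-- `P_s(t)`: the set of predecessors of `t` with respect to source `s`:
nodes `y` with `(y,t) ∈ E` and `d(s,y) + ω(y,t) = d(s,t) < ∞`. -/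
def pred (G : WDigraph V) (s t : V) : Set V :=
  {y | G.E y t ∧ G.dist s y + (G.w y t : EReal) = G.dist s t ∧ G.dist s t < ⊤}

/-- `δ_{s•}(v)`: Brandes's one-sided dependency of `s` on `v`
(a summand is `0` whenever its denominator is `0`, which is automatic since
in Lean division by zero yields zero). -/
noncomputable def delta (G : WDigraph V) (s v : V) : ℝ :=
  ∑ᶠ t ∈ {t : V | t ≠ s ∧ t ≠ v}, (G.sigmaV s t v : ℝ) / (G.sigma s t : ℝ)

/-- `c_B(v)`: the betweenness centrality of `v`. -/
noncomputable def bc (G : WDigraph V) (v : V) : ℝ :=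
  ∑ᶠ s ∈ {s : V | s ≠ v}, G.delta s v

/-- `G'` is obtained from `G` by the incremental update `(u, v, ω'(u,v))`:
either a new edge `(u,v) ∉ E` is inserted with positive weight, or the weight
of the existing edge `(u,v)` is decreased; all other edges and weights are
unchanged. (Positivity of all weights is part of the `WDigraph` structure.) -/
structure IsUpdate (G G' : WDigraph V) (u v : V) : Prop where
  /-- the updated edge is present in `G'` -/
  edge' : G'.E u v
  /-- `E' = E ∪ {(u,v)}` -/
  edge_iff : ∀ a b, G'.E a b ↔ G.E a b ∨ a = u ∧ b = v
  /-- `ω'` agrees with `ω` on all edges other than `(u,v)` -/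
  weight_eq : ∀ a b, ¬(a = u ∧ b = v) → G'.w a b = G.w a b
  /-- either an insertion of a new edge, or a weight decrease of an existing one -/
  insert_or_decrease : ¬ G.E u v ∨ (G.E u v ∧ G'.w u v < G.w u v)

/-- `S(t)`: the affected sources of `t`. -/
def affS (G G' : WDigraph V) (t : V) : Set V :=
  {s | G.dist s t > G'.dist s t ∨ G.sigma s t ≠ G'.sigma s t}

/-- `T(s)`: the affected targets of `s`. -/
def affT (G G' : WDigraph V) (s : V) : Set V :=
  {t | G.dist s t > G'.dist s t ∨ G.sigma s t ≠ G'.sigma s t}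

/-- `Δ_{s•}(v) = Σ_{t ∈ T(s), t ≠ v} σ_{st}(v)/σ_{st}`, computed in `G`
(`0`-convention for zero denominators). -/
noncomputable def Delta (G G' : WDigraph V) (s v : V) : ℝ :=
  ∑ᶠ t ∈ {t : V | t ∈ affT G G' s ∧ t ≠ v}, (G.sigmaV s t v : ℝ) / (G.sigma s t : ℝ)

/-- `Δ'_{s•}(v) = Σ_{t ∈ T(s), t ≠ v} σ'_{st}(v)/σ'_{st}`, computed in `G'`
(`0`-convention for zero denominators). -/
noncomputable def Delta' (G G' : WDigraph V) (s v : V) : ℝ :=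
  ∑ᶠ t ∈ {t : V | t ∈ affT G G' s ∧ t ≠ v}, (G'.sigmaV s t v : ℝ) / (G'.sigma s t : ℝ)

set_option linter.unusedSectionVars false

section Aux

variable {G : WDigraph V} {s t x y w u v : V} {p q a b : List V}

/-! ### pw lemmas -/

theorem pw_cons_cons (a b : V) (r : List V) : G.pw (a :: b :: r) = G.w a b + G.pw (b :: r) := rfl

theorem pw_nonneg (h : List.Chain' G.E p) : 0 ≤ G.pw p := by
  induction p with
  | nil => simp [pw]
  | cons a r ih =>
    cases r with
    | nil => simp [pw]
    | cons b r' =>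
      rw [pw_cons_cons]
      have hab : G.E a b := (List.isChain_cons_cons.mp h).1
      have := ih (List.isChain_cons_cons.mp h).2
      nlinarith [G.pos a b hab]

theorem pw_pos {a b : V} {r : List V} (h : List.Chain' G.E (a :: b :: r)) :
    0 < G.pw (a :: b :: r) := by
  rw [pw_cons_cons]
  have hab : G.E a b := (List.isChain_cons_cons.mp h).1
  have := pw_nonneg (G := G) (List.isChain_cons_cons.mp h).2
  nlinarith [G.pos a b hab]

theorem pw_append (G : WDigraph V) (y : V) (b : List V) :
    ∀ a : List V, G.pw (a ++ y :: b) = G.pw (a ++ [y]) + G.pw (y :: b) := by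
  intro a
  induction a with
  | nil => simp [pw]
  | cons c a ih =>
    cases a with
    | nil => simp [pw]
    | cons d a' =>
      simp only [List.cons_append, pw_cons_cons] at *
      rw [ih]; ring

/-! ### path basics -/

theorem IsPath.ne_nil (h : G.IsPath s t p) : p ≠ [] := by
  rintro rfl; simpa using h.2.1

theorem IsPath.mem_start (h : G.IsPath s t p) : s ∈ p := by
  have := h.2.1; cases p with
  | nil => simp at this
  | cons a r => simp_all

theorem IsPath.mem_end (h : G.IsPath s t p) : t ∈ p := by
  have h2 := h.2.2.1
  obtain ⟨hne, heq⟩ := List.mem_getLast?_eq_getLast (l := p) (x := t) h2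
  exact heq ▸ List.getLast_mem hne

theorem dist_le (h : G.IsPath s t p) : G.dist s t ≤ (G.pw p : EReal) :=
  sInf_le ⟨p, h, rfl⟩

theorem paths_finite (G : WDigraph V) (s t : V) : {p | G.IsPath s t p}.Finite := by
  apply Set.Finite.subset (List.finite_length_le V (Fintype.card V))
  intro p hp
  exact hp.2.2.2.length_le_card

theorem SP_finite (G : WDigraph V) (s t : V) : (G.SP s t).Finite :=
  (G.paths_finite s t).subset fun p hp => hp.1

theorem mem_SP_isPath (h : p ∈ G.SP s t) : G.IsPath s t p := h.1

theorem dist_eq_top_iff : G.dist s t = ⊤ ↔ {p | G.IsPath s t p} = ∅ := by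
  constructor
  · intro h
    by_contra hne
    obtain ⟨p, hp⟩ := Set.nonempty_iff_ne_empty.mpr hne
    have := dist_le hp
    rw [h] at this
    exact absurd (top_le_iff.mp this) (by simp)
  · intro h
    unfold dist
    rw [h]; simp

theorem exists_SP (h : G.dist s t < ⊤) : ∃ p, p ∈ G.SP s t := by
  have hne : {p | G.IsPath s t p}.Nonempty := by
    rw [Set.nonempty_iff_ne_empty]
    intro he
    rw [← dist_eq_top_iff] at he
    simp [he] at h
  have hfin : ((fun p => (G.pw p : EReal)) '' {p | G.IsPath s t p}).Finite :=
    (G.paths_finite s t).image _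
  have hmem := Set.Nonempty.csInf_mem (hne.image _) hfin
  obtain ⟨p, hp, hpq⟩ := hmem
  exact ⟨p, hp, hpq⟩

theorem SP_dist (h : p ∈ G.SP s t) : G.dist s t = (G.pw p : EReal) := h.2.symm

theorem dist_lt_top (h : p ∈ G.SP s t) : G.dist s t < ⊤ := by
  rw [SP_dist h]; exact EReal.coe_lt_top _

theorem dist_nonneg (G : WDigraph V) (s t : V) : 0 ≤ G.dist s t := by
  apply le_sInf
  rintro x ⟨p, hp, rfl⟩
  simpa using (EReal.coe_le_coe_iff.mpr (pw_nonneg hp.1))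

theorem sigma_ne_zero_iff : G.sigma s t ≠ 0 ↔ G.dist s t < ⊤ := by
  constructor
  · intro h
    have : (G.SP s t).Nonempty := by
      rw [Set.nonempty_iff_ne_empty]
      intro he
      rw [sigma, he] at h; simp at h
    exact dist_lt_top this.choose_spec
  · intro h
    obtain ⟨p, hp⟩ := exists_SP h
    exact Set.ncard_ne_zero_of_mem hp (SP_finite G s t)

/-! ### walk reduction -/

theorem walk_reduce_aux (G : WDigraph V) (t : V) :
    ∀ n, ∀ (s : V) (l : List V), l.length ≤ n → List.Chain' G.E l → l.head? = some s →
      l.getLast? = some t →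
      ∃ p, G.IsPath s t p ∧ G.pw p ≤ G.pw l ∧ (¬ l.Nodup → G.pw p < G.pw l) := by
  intro n
  induction n with
  | zero =>
    intro s l hl
    have : l = [] := List.length_eq_zero_iff.mp (Nat.le_zero.mp hl)
    subst this; simp
  | succ n ih =>
    intro s l hl hc hh ht
    by_cases hnd : l.Nodup
    · exact ⟨l, ⟨hc, hh, ht, hnd⟩, le_refl _, fun h => absurd hnd h⟩
    · cases l with
      | nil => simp at hh
      | cons a rest =>
        have hsa : s = a := by simpa using hh.symm
        subst hsa
        cases rest with
        | nil => simp at hnd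
        | cons c r' =>
          set rest := c :: r' with hrest
          by_cases ha : s ∈ rest
          · -- cut the loop at the repeated start vertex
            obtain ⟨c₁, d, hd⟩ := List.append_of_mem ha
            have hleq : (s :: rest) = (s :: c₁) ++ s :: d := by simp [hd]
            have hsuf : (s :: d) <:+ (s :: rest) :=
              ⟨s :: c₁, by simp [hleq]⟩
            have hlen : (s :: d).length ≤ n := by
              have := hl
              rw [hleq] at this
              simp at this ⊢
              omega
            have hch2 : List.Chain' G.E (s :: d) := hc.suffix hsuf
            have hlast2 : (s :: d).getLast? = some t := by
              rw [hleq] at ht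
              rwa [List.getLast?_append_of_ne_nil _ (by simp)] at ht
            obtain ⟨p, hp, hle, _⟩ := ih s (s :: d) hlen hch2 (by simp) hlast2
            have hsplit : G.pw (s :: rest) = G.pw ((s :: c₁) ++ [s]) + G.pw (s :: d) := by
              rw [hleq]; exact G.pw_append s d (s :: c₁)
            have hpos : 0 < G.pw ((s :: c₁) ++ [s]) := by
              have hchp : List.Chain' G.E ((s :: c₁) ++ [s]) :=
                hc.prefix ⟨d, by simp [hleq]⟩
              cases c₁ with
              | nil => exact pw_pos hchp
              | cons e r => exact pw_pos hchp
            have : G.pw p < G.pw (s :: rest) := by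
              rw [hsplit]; linarith
            exact ⟨p, hp, le_of_lt this, fun _ => this⟩
          · -- start vertex not repeated; recurse on the tail
            have hlen : rest.length ≤ n := by simpa using hl
            have hch2 : List.Chain' G.E rest := hc.tail
            have hlast2 : rest.getLast? = some t := by
              have : (s :: rest) = [s] ++ rest := rfl
              rw [this, List.getLast?_append_of_ne_nil _ (by simp [hrest])] at ht
              exact ht
            obtain ⟨q, hq, hle, hlt⟩ := ih c rest hlen hch2 (by simp [hrest]) hlast2
            have hqc : q.head? = some c := hq.2.1
            obtain ⟨q', hq'⟩ : ∃ q', q = c :: q' := ⟨q.tail, (List.cons_head?_tail hqc).symm⟩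
            have hsc : G.E s c := (List.isChain_cons_cons.mp hc).1
            have hpwl : G.pw (s :: rest) = G.w s c + G.pw rest := rfl
            by_cases haq : s ∈ q
            · -- s occurs in the reduced tail path: cut there
              obtain ⟨c₂, d₂, hd₂⟩ := List.append_of_mem haq
              have hsuf : (s :: d₂) <:+ q := ⟨c₂, by simp [hd₂]⟩
              have hch3 : List.Chain' G.E (s :: d₂) := hq.1.suffix hsuf
              have hnd3 : (s :: d₂).Nodup := hq.2.2.2.sublist hsuf.sublist
              have hlast3 : (s :: d₂).getLast? = some t := by
                have := hq.2.2.1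
                rw [hd₂, List.getLast?_append_of_ne_nil _ (by simp)] at this
                exact this
              refine ⟨s :: d₂, ⟨hch3, by simp, hlast3, hnd3⟩, ?_, ?_⟩
              · have h1 : G.pw q = G.pw (c₂ ++ [s]) + G.pw (s :: d₂) := by
                  rw [hd₂]; exact G.pw_append s d₂ c₂
                have h2 : 0 ≤ G.pw (c₂ ++ [s]) :=
                  pw_nonneg (hq.1.prefix ⟨d₂, by simp [hd₂]⟩)
                have h3 : 0 < G.w s c := G.pos _ _ hsc
                rw [hpwl]; linarith
              · intro _
                have h1 : G.pw q = G.pw (c₂ ++ [s]) + G.pw (s :: d₂) := by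
                  rw [hd₂]; exact G.pw_append s d₂ c₂
                have h2 : 0 ≤ G.pw (c₂ ++ [s]) :=
                  pw_nonneg (hq.1.prefix ⟨d₂, by simp [hd₂]⟩)
                have h3 : 0 < G.w s c := G.pos _ _ hsc
                rw [hpwl]; linarith
            · -- prepend s to the reduced tail path
              have hch3 : List.Chain' G.E (s :: q) := by
                refine List.isChain_cons.mpr ?_
                refine ⟨fun y hy => ?_, hq.1⟩
                rw [hqc, Option.mem_def, Option.some_inj] at hy
                exact hy ▸ hsc
              have hnd3 : (s :: q).Nodup := by
                rw [List.nodup_cons]; exact ⟨haq, hq.2.2.2⟩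
              have hlast3 : (s :: q).getLast? = some t := by
                rw [hq', List.getLast?_cons_cons]
                rw [hq'] at hq
                exact hq.2.2.1
              have hpwq : G.pw (s :: q) = G.w s c + G.pw q := by rw [hq']; rfl
              refine ⟨s :: q, ⟨hch3, by simp, hlast3, hnd3⟩, by rw [hpwq, hpwl]; linarith, ?_⟩
              intro _
              have hndrest : ¬ rest.Nodup := by
                intro hr
                exact hnd (List.nodup_cons.mpr ⟨ha, hr⟩)
              have := hlt hndrest
              rw [hpwq, hpwl]; linarith

theorem walk_reduce (G : WDigraph V) {s t : V} {l : List V} (hc : List.Chain' G.E l)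
    (hh : l.head? = some s) (ht : l.getLast? = some t) :
    ∃ p, G.IsPath s t p ∧ G.pw p ≤ G.pw l ∧ (¬ l.Nodup → G.pw p < G.pw l) :=
  G.walk_reduce_aux t l.length s l le_rfl hc hh ht

/-! ### splitting paths -/

theorem eq_concat_of_getLast? {q : List V} (h : q.getLast? = some y) : ∃ e, q = e ++ [y] := by
  have hne : q ≠ [] := by rintro rfl; simp at h
  refine ⟨q.dropLast, ?_⟩
  have := List.dropLast_concat_getLast hne
  rw [List.getLast?_eq_getLast hne, Option.some_inj] at h
  rw [h] at this
  exact this.symm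

theorem head?_of_path_split (h : (a ++ y :: b).head? = some s) : (a ++ [y]).head? = some s := by
  cases a with
  | nil => simpa using h
  | cons e r => simpa using h

/-- any prefix of a shortest path (cut at a vertex) is a shortest path -/
theorem prefix_shortest {a b : List V} (hp : (a ++ y :: b) ∈ G.SP s t) :
    (a ++ [y]) ∈ G.SP s y := by
  obtain ⟨⟨hc, hh, ht, hnd⟩, hpw⟩ := hp
  have hpath : G.IsPath s y (a ++ [y]) := by
    refine ⟨hc.prefix ⟨b, by simp⟩, head?_of_path_split hh, by simp, ?_⟩
    exact hnd.sublist ((a ++ [y]).sublist_append_left b |>.trans (by simp))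
  have hle : G.dist s y ≤ (G.pw (a ++ [y]) : EReal) := dist_le hpath
  have hsplit : G.pw (a ++ y :: b) = G.pw (a ++ [y]) + G.pw (y :: b) := G.pw_append y b a
  rcases lt_or_eq_of_le hle with hlt | heq
  · exfalso
    obtain ⟨q₀, hq₀⟩ := exists_SP (lt_trans hlt (EReal.coe_lt_top _))
    have hq₀pw : G.dist s y = (G.pw q₀ : EReal) := SP_dist hq₀
    have hq₀lt : G.pw q₀ < G.pw (a ++ [y]) := by
      rw [hq₀pw] at hlt; exact_mod_cast hlt
    obtain ⟨e, he⟩ := eq_concat_of_getLast? hq₀.1.2.2.1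
    -- the walk q₀ ++ b
    have hcyb : List.Chain' G.E (y :: b) := hc.suffix ⟨a, rfl⟩
    have hcw : List.Chain' G.E (q₀ ++ b) := by
      refine List.isChain_append.mpr ?_
      refine ⟨hq₀.1.1, hcyb.tail, ?_⟩
      intro x hx z hz
      rw [hq₀.1.2.2.1, Option.mem_def, Option.some_inj] at hx
      subst hx
      cases b with
      | nil => simp at hz
      | cons d r =>
        rw [Option.mem_def] at hz
        simp only [List.head?_cons, Option.some_inj] at hz
        subst hz
        exact (List.isChain_cons_cons.mp hcyb).1
    have hhw : (q₀ ++ b).head? = some s := by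
      cases q₀ with
      | nil => exact absurd rfl hq₀.1.ne_nil
      | cons e' r => simpa using hq₀.1.2.1
    have htw : (q₀ ++ b).getLast? = some t := by
      cases b with
      | nil =>
        simp only [List.append_nil]
        rw [hq₀.1.2.2.1]
        have hyt : some y = some t := by rw [← List.getLast?_concat (l := a), ht]
        exact hyt
      | cons d r =>
        rw [List.getLast?_append_of_ne_nil _ (by simp)]
        have h5 := ht
        rw [List.getLast?_append_of_ne_nil _ (by simp)] at h5
        simpa using h5
    have hpww : G.pw (q₀ ++ b) < G.pw (a ++ y :: b) := by
      have h1 : G.pw (q₀ ++ b) = G.pw q₀ + G.pw (y :: b) := by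
        rw [he]
        have : (e ++ [y]) ++ b = e ++ y :: b := by simp
        rw [this, G.pw_append y b e, ← he]
      rw [h1, hsplit]
      have := pw_nonneg hcyb
      linarith
    obtain ⟨p', hp', hle', _⟩ := G.walk_reduce hcw hhw htw
    have : G.dist s t ≤ (G.pw p' : EReal) := dist_le hp'
    rw [← hpw] at this
    have : G.pw (a ++ y :: b) ≤ G.pw p' := by exact_mod_cast this
    linarith
  · exact ⟨hpath, heq.symm⟩

/-- a vertex on a shortest path is no farther than the endpoint -/
theorem dist_le_of_mem_SP (hp : p ∈ G.SP s t) (hy : y ∈ p) : G.dist s y ≤ G.dist s t := by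
  obtain ⟨a, b, rfl⟩ := List.append_of_mem hy
  have h1 := prefix_shortest hp
  rw [SP_dist h1, SP_dist hp]
  have hsplit : G.pw (a ++ y :: b) = G.pw (a ++ [y]) + G.pw (y :: b) := G.pw_append y b a
  have hnn : 0 ≤ G.pw (y :: b) := pw_nonneg (hp.1.1.suffix ⟨a, rfl⟩)
  apply EReal.coe_le_coe_iff.mpr
  linarith

/-! ### nodup unique splitting -/

theorem nodup_split_unique {y : V} :
    ∀ (a : List V) {b : List V} (a' : List V) {b' : List V},
      (a ++ y :: b).Nodup → a ++ y :: b = a' ++ y :: b' → a = a' ∧ b = b' := by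
  intro a
  induction a with
  | nil =>
    intro b a' b' hnd he
    cases a' with
    | nil => simpa using he
    | cons c a'' =>
      exfalso
      have hyc : y = c := by simpa using congrArg List.head? he
      have htl : b = a'' ++ c :: b' := by
        have := congrArg List.tail he
        simpa [← hyc] using this
      have : y ∈ b := by rw [htl, ← hyc]; simp
      have hnd' : y ∉ b ∧ b.Nodup := by simpa using hnd
      exact hnd'.1 this
  | cons c a₂ ih =>
    intro b a' b' hnd he
    cases a' with
    | nil =>
      exfalso
      have hyc : c = y := by simpa using congrArg List.head? he
      have hnd' : c ∉ a₂ ++ y :: b ∧ (a₂ ++ y :: b).Nodup := by simpa using hnd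
      exact hnd'.1 (by rw [hyc]; simp)
    | cons c' a₃ =>
      simp only [List.cons_append] at he
      have hcc : c = c' := by simpa using congrArg List.head? he
      subst hcc
      have he2 : a₂ ++ y :: b = a₃ ++ y :: b' := by simpa using congrArg List.tail he
      have hnd2 : (a₂ ++ y :: b).Nodup := by
        have hnd' : c ∉ a₂ ++ y :: b ∧ (a₂ ++ y :: b).Nodup := by simpa using hnd
        exact hnd'.2
      obtain ⟨h1, h2⟩ := ih a₃ hnd2 he2
      exact ⟨by rw [h1], h2⟩

/-! ### the suffix set and gluing -/

def Suf (G : WDigraph V) (s w t : V) : Set (List V) :=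
  {r | List.Chain' G.E r ∧ r.head? = some w ∧ r.getLast? = some t ∧ r.Nodup ∧
       G.dist s w + (G.pw r : EReal) = G.dist s t}

theorem Suf_tail_ne_nil (hwt : w ≠ t) (hr : r ∈ G.Suf s w t) : r.tail ≠ [] := by
  intro h
  obtain ⟨_, hh, ht, _, _⟩ := hr
  have : r = [w] := by
    have := List.cons_head?_tail (a := w) hh
    rw [h] at this
    exact this.symm
  rw [this] at ht
  simp at ht
  exact hwt ht

theorem glue (hwt : w ≠ t) (hq : q ∈ G.SP s w) {r : List V} (hr : r ∈ G.Suf s w t) :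
    (q ++ r.tail) ∈ G.SP s t := by
  obtain ⟨hrc, hrh, hrt, hrnd, hrw⟩ := hr
  have hrcons : w :: r.tail = r := List.cons_head?_tail hrh
  obtain ⟨e, he⟩ := eq_concat_of_getLast? hq.1.2.2.1
  have htail_ne : r.tail ≠ [] := Suf_tail_ne_nil hwt ⟨hrc, hrh, hrt, hrnd, hrw⟩
  -- chain
  have hcw : List.Chain' G.E (q ++ r.tail) := by
    refine List.isChain_append.mpr ?_
    refine ⟨hq.1.1, (hrcons ▸ hrc).tail, ?_⟩
    intro p1 hp1 p2 hp2
    rw [hq.1.2.2.1, Option.mem_def, Option.some_inj] at hp1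
    subst hp1
    rw [← hrcons] at hrc
    cases htl : r.tail with
    | nil => exact absurd htl htail_ne
    | cons d rr =>
      rw [htl, Option.mem_def, List.head?_cons, Option.some_inj] at hp2
      subst hp2
      rw [htl] at hrc
      exact (List.isChain_cons_cons.mp hrc).1
  have hhw : (q ++ r.tail).head? = some s := by
    cases q with
    | nil => exact absurd rfl hq.1.ne_nil
    | cons e' rq => simpa using hq.1.2.1
  have htw : (q ++ r.tail).getLast? = some t := by
    rw [List.getLast?_append_of_ne_nil _ htail_ne]
    rw [← hrcons] at hrt
    rw [← List.getLast?_append_of_ne_nil [w] htail_ne]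
    simpa using hrt
  have hpwq : G.pw (q ++ r.tail) = G.pw q + G.pw r := by
    conv_lhs => rw [he]
    have h1 : (e ++ [w]) ++ r.tail = e ++ w :: r.tail := by simp
    rw [h1, G.pw_append w r.tail e, ← he, hrcons]
  have hdist : (G.pw (q ++ r.tail) : EReal) = G.dist s t := by
    rw [hpwq, ← hrw, SP_dist hq]
    push_cast
    rfl
  -- nodup via walk reduction
  have hnd : (q ++ r.tail).Nodup := by
    by_contra hcon
    obtain ⟨p', hp', _, hlt⟩ := G.walk_reduce hcw hhw htw
    have h2 := hlt hcon
    have h3 : G.dist s t ≤ (G.pw p' : EReal) := dist_le hp'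
    rw [← hdist] at h3
    have : G.pw (q ++ r.tail) ≤ G.pw p' := by exact_mod_cast h3
    linarith
  exact ⟨⟨hcw, hhw, htw, hnd⟩, hdist⟩

/-! ### pred facts -/

theorem pred_dist_lt (hx : x ∈ G.pred s w) : G.dist s x < G.dist s w := by
  obtain ⟨hE, heq, hlt⟩ := hx
  have hxt : G.dist s x ≠ ⊤ := by
    intro h
    rw [h] at heq
    rw [EReal.top_add_of_ne_bot (by simp : (G.w x w : EReal) ≠ ⊥)] at heq
    rw [← heq] at hlt
    exact absurd hlt (lt_irrefl _)
  have hxb : G.dist s x ≠ ⊥ := ne_bot_of_le_ne_bot (by simp) (G.dist_nonneg s x)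
  rw [← heq, ← EReal.coe_toReal hxt hxb, ← EReal.coe_add, EReal.coe_lt_coe_iff]
  have := G.pos x w hE
  linarith

theorem pred_dist_lt_top (hx : x ∈ G.pred s w) : G.dist s x < ⊤ :=
  lt_trans (pred_dist_lt hx) hx.2.2

theorem pred_ne (hx : x ∈ G.pred s w) : w ≠ x := by
  intro h
  rw [h] at hx
  exact absurd (pred_dist_lt hx) (lt_irrefl _)

theorem pred_sigma_ne_zero (hx : x ∈ G.pred s w) : G.sigma s x ≠ 0 :=
  sigma_ne_zero_iff.mpr (pred_dist_lt_top hx)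

theorem pred_sigma_ne_zero' (hx : x ∈ G.pred s w) : G.sigma s w ≠ 0 :=
  sigma_ne_zero_iff.mpr hx.2.2

/-- Lemma Z : a vertex strictly farther than x is on no shortest s-x path -/
theorem sigmaV_eq_zero (hx : x ∈ G.pred s w) : G.sigmaV s x w = 0 := by
  rw [sigmaV]
  convert Set.ncard_empty (List V)
  ext p
  simp only [Set.mem_sep_iff, Set.mem_empty_iff_false, iff_false, not_and]
  intro hp hw
  exact absurd (lt_of_lt_of_le (pred_dist_lt hx) (dist_le_of_mem_SP hp hw)) (lt_irrefl _)

/-! ### B1 : appending the edge (x,w) -/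

theorem B1_mem (hx : x ∈ G.pred s w) (hq : q ∈ G.SP s x) :
    q ++ [w] ∈ G.SP s w ∧ [x, w] <:+: q ++ [w] := by
  obtain ⟨hE, heq, hlt⟩ := hx
  obtain ⟨e, he⟩ := eq_concat_of_getLast? hq.1.2.2.1
  have hwq : w ∉ q := by
    intro hw
    exact absurd (lt_of_lt_of_le (pred_dist_lt ⟨hE, heq, hlt⟩) (dist_le_of_mem_SP hq hw))
      (lt_irrefl _)
  have hch : List.Chain' G.E (q ++ [w]) := by
    refine List.isChain_append.mpr ?_
    refine ⟨hq.1.1, List.isChain_singleton _, ?_⟩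
    intro p1 hp1 p2 hp2
    rw [hq.1.2.2.1, Option.mem_def, Option.some_inj] at hp1
    rw [Option.mem_def, List.head?_cons, Option.some_inj] at hp2
    subst hp1; subst hp2
    exact hE
  have hpw : G.pw (q ++ [w]) = G.pw q + G.w x w := by
    conv_lhs => rw [he]
    have h1 : (e ++ [x]) ++ [w] = e ++ x :: [w] := by simp
    rw [h1, G.pw_append x [w] e, ← he]
    simp [pw]
  have hdist : (G.pw (q ++ [w]) : EReal) = G.dist s w := by
    rw [hpw, ← heq, SP_dist hq]
    push_cast
    rfl
  have hh : (q ++ [w]).head? = some s := by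
    cases q with
    | nil => exact absurd rfl hq.1.ne_nil
    | cons e' rq => simpa using hq.1.2.1
  refine ⟨⟨⟨hch, hh, by simp, ?_⟩, hdist⟩, ⟨e, [], by simp [he]⟩⟩
  · rw [List.nodup_append]
    exact ⟨hq.1.2.2.2, List.nodup_singleton _,
      fun a ha b hb => by simp at hb; subst hb; exact fun h => hwq (h ▸ ha)⟩

theorem B1_surj (hx : x ∈ G.pred s w) {q' : List V} (hq' : q' ∈ G.SP s w)
    (hinf : [x, w] <:+: q') : ∃ q ∈ G.SP s x, q ++ [w] = q' := by
  obtain ⟨c, d, hcd⟩ := hinf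
  have hd : d = [] := by
    by_contra hd
    have hlast : q'.getLast? = some w := hq'.1.2.2.1
    rw [← hcd] at hlast
    have h1 : (c ++ [x, w] ++ d).getLast? = d.getLast? := by
      rw [List.getLast?_append_of_ne_nil _ hd]
    rw [h1] at hlast
    have hwd : w ∈ d := by
      obtain ⟨hne, hh⟩ := List.mem_getLast?_eq_getLast (l := d) (x := w) hlast
      exact hh ▸ List.getLast_mem hne
    have hnd := hq'.1.2.2.2
    rw [← hcd] at hnd
    have : (c ++ [x, w] ++ d) = (c ++ [x]) ++ w :: d := by simp
    rw [this] at hnd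
    have := (List.nodup_append.mp hnd).2.1
    rw [List.nodup_cons] at this
    exact this.1 hwd
  subst hd
  have hq'eq : q' = c ++ x :: [w] := by rw [← hcd]; simp
  have hmem0 : c ++ x :: [w] ∈ G.SP s w := hq'eq ▸ hq'
  have hmem : c ++ [x] ∈ G.SP s x := prefix_shortest (b := [w]) hmem0
  exact ⟨c ++ [x], hmem, by rw [hq'eq]; simp⟩

theorem B1_count (hx : x ∈ G.pred s w) :
    {q' ∈ G.SP s w | [x, w] <:+: q'}.ncard = G.sigma s x := by
  rw [sigma]
  have himg : (fun q => q ++ [w]) '' G.SP s x = {q' ∈ G.SP s w | [x, w] <:+: q'} := by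
    ext q'
    constructor
    · rintro ⟨q, hq, rfl⟩
      exact ⟨(B1_mem hx hq).1, (B1_mem hx hq).2⟩
    · rintro ⟨hq', hinf⟩
      obtain ⟨q, hq, hqe⟩ := B1_surj hx hq' hinf
      exact ⟨q, hq, hqe⟩
  have hinj : Set.InjOn (fun q => q ++ [w]) (G.SP s x) := by
    intro q1 _ q2 _ h
    simpa using h
  rw [← himg, Set.ncard_image_of_injOn hinj]

/-! ### decomposing a shortest path at a vertex -/

theorem decomp (hwt : w ≠ t) {a b : List V} (hp : (a ++ w :: b) ∈ G.SP s t) :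
    (a ++ [w]) ∈ G.SP s w ∧ (w :: b) ∈ G.Suf s w t := by
  have h1 : (a ++ [w]) ∈ G.SP s w := prefix_shortest hp
  refine ⟨h1, ?_, by simp, ?_, ?_, ?_⟩
  · exact hp.1.1.suffix ⟨a, rfl⟩
  · have := hp.1.2.2.1
    rwa [List.getLast?_append_of_ne_nil _ (by simp)] at this
  · exact hp.1.2.2.2.sublist (List.sublist_append_right a _)
  · rw [SP_dist h1, SP_dist hp, G.pw_append w b a]
    push_cast
    rfl

theorem glue_injOn (hwt : w ≠ t) :
    Set.InjOn (fun qr : List V × List V => qr.1 ++ qr.2.tail)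
      (G.SP s w ×ˢ G.Suf s w t) := by
  rintro ⟨q, r⟩ hqr ⟨q', r'⟩ hqr' h
  simp only [Set.mem_prod] at hqr hqr'
  obtain ⟨hq, hr⟩ := hqr
  obtain ⟨hq', hr'⟩ := hqr'
  obtain ⟨e, he⟩ := eq_concat_of_getLast? hq.1.2.2.1
  obtain ⟨e', he'⟩ := eq_concat_of_getLast? hq'.1.2.2.1
  have hrc : w :: r.tail = r := List.cons_head?_tail hr.2.1
  have hrc' : w :: r'.tail = r' := List.cons_head?_tail hr'.2.1
  simp only at h
  have hglue := glue hwt hq hr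
  have hnd : (q ++ r.tail).Nodup := hglue.1.2.2.2
  have heq : e ++ w :: r.tail = e' ++ w :: r'.tail := by
    have h1 : e ++ w :: r.tail = q ++ r.tail := by rw [he]; simp
    have h2 : e' ++ w :: r'.tail = q' ++ r'.tail := by rw [he']; simp
    rw [h1, h2, h]
  have hnd2 : (e ++ w :: r.tail).Nodup := by
    have : q ++ r.tail = e ++ w :: r.tail := by rw [he]; simp
    rwa [this] at hnd
  obtain ⟨h1, h2⟩ := nodup_split_unique e e' hnd2 heq
  have hqq : q = q' := by rw [he, he', h1]
  have hrr : r = r' := by rw [← hrc, ← hrc', h2]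
  simp [hqq, hrr]

theorem glue_image (hwt : w ≠ t) :
    (fun qr : List V × List V => qr.1 ++ qr.2.tail) '' (G.SP s w ×ˢ G.Suf s w t)
      = {p ∈ G.SP s t | w ∈ p} := by
  ext p
  constructor
  · rintro ⟨⟨q, r⟩, hqr, rfl⟩
    simp only [Set.mem_prod] at hqr
    refine ⟨glue hwt hqr.1 hqr.2, ?_⟩
    obtain ⟨e, he⟩ := eq_concat_of_getLast? hqr.1.1.2.2.1
    simp [he]
  · rintro ⟨hp, hw⟩
    obtain ⟨a, b, hab⟩ := List.append_of_mem hw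
    rw [hab] at hp
    obtain ⟨h1, h2⟩ := decomp hwt hp
    exact ⟨(a ++ [w], w :: b), Set.mem_prod.mpr ⟨h1, h2⟩, by simp [hab]⟩

theorem glue_image_edge (hx : x ∈ G.pred s w) (hwt : w ≠ t) :
    (fun qr : List V × List V => qr.1 ++ qr.2.tail) ''
        ({q ∈ G.SP s w | [x, w] <:+: q} ×ˢ G.Suf s w t)
      = {p ∈ G.SP s t | [x, w] <:+: p} := by
  ext p
  constructor
  · rintro ⟨⟨q, r⟩, hqr, rfl⟩
    simp only [Set.mem_prod] at hqr
    refine ⟨glue hwt hqr.1.1 hqr.2, ?_⟩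
    exact hqr.1.2.trans (q.prefix_append r.tail).isInfix
  · rintro ⟨hp, hinf⟩
    obtain ⟨c, d, hcd⟩ := hinf
    have hab : p = (c ++ [x]) ++ w :: d := by rw [← hcd]; simp
    rw [hab] at hp
    obtain ⟨h1, h2⟩ := decomp hwt hp
    refine ⟨(c ++ [x] ++ [w], w :: d), Set.mem_prod.mpr ⟨⟨h1, ⟨c, [], by simp⟩⟩, h2⟩, ?_⟩
    simp [hab]

theorem ncard_prod (A : Set (List V)) (B : Set (List V)) :
    (A ×ˢ B).ncard = A.ncard * B.ncard := by
  rw [← Nat.card_coe_set_eq, ← Nat.card_coe_set_eq, ← Nat.card_coe_set_eq,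
    Nat.card_congr (Equiv.Set.prod A B), Nat.card_prod]

/-- counting paths through w -/
theorem sigmaV_count (hwt : w ≠ t) :
    G.sigmaV s t w = G.sigma s w * (G.Suf s w t).ncard := by
  rw [sigmaV, ← glue_image hwt, Set.ncard_image_of_injOn (glue_injOn hwt),
    ncard_prod, sigma]

/-- counting paths through edge (x,w) -/
theorem sigmaE_count (hx : x ∈ G.pred s w) (hwt : w ≠ t) :
    G.sigmaE s t x w = G.sigma s x * (G.Suf s w t).ncard := by
  rw [sigmaE, ← glue_image_edge hx hwt,
    Set.ncard_image_of_injOn ((glue_injOn hwt).mono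
      (Set.prod_mono_left (Set.sep_subset _ _))),
    ncard_prod, B1_count hx]

/-- B2 : the exchange identity -/
theorem B2 (hx : x ∈ G.pred s w) (hwt : w ≠ t) :
    G.sigma s w * G.sigmaE s t x w = G.sigma s x * G.sigmaV s t w := by
  rw [sigmaE_count hx hwt, sigmaV_count hwt]
  ring

/-! ### partition of paths through x by successor -/

theorem succ_exists (hxt : x ≠ t) (hp : p ∈ G.SP s t) (hxp : x ∈ p) :
    ∃ w, x ∈ G.pred s w ∧ [x, w] <:+: p := by
  obtain ⟨a, b, hab⟩ := List.append_of_mem hxp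
  cases b with
  | nil =>
    exfalso
    rw [hab] at hp
    have := hp.1.2.2.1
    rw [List.getLast?_concat] at this
    exact hxt (by simpa using this)
  | cons w b' =>
    refine ⟨w, ?_, ⟨a, b', by rw [hab]; simp⟩⟩
    rw [hab] at hp
    have h1 : a ++ [x] ∈ G.SP s x := prefix_shortest hp
    have hp2 : (a ++ [x]) ++ w :: b' ∈ G.SP s t := by
      have : (a ++ [x]) ++ w :: b' = a ++ x :: w :: b' := by simp
      rw [this]
      exact hp
    have h2 : (a ++ [x]) ++ [w] ∈ G.SP s w := prefix_shortest hp2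
    have hE : G.E x w := by
      have hch := hp.1.1
      have hsuf : List.Chain' G.E (x :: w :: b') := hch.suffix ⟨a, rfl⟩
      exact (List.isChain_cons_cons.mp hsuf).1
    refine ⟨hE, ?_, dist_lt_top h2⟩
    rw [SP_dist h1, SP_dist h2]
    have : (a ++ [x]) ++ [w] = a ++ x :: [w] := by simp
    rw [this, G.pw_append x [w] a]
    push_cast
    simp [pw]

theorem succ_unique {w' : V} (hnd : p.Nodup) (h1 : [x, w] <:+: p) (h2 : [x, w'] <:+: p) :
    w = w' := by
  obtain ⟨c, d, hcd⟩ := h1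
  obtain ⟨c', d', hcd'⟩ := h2
  have e1 : c ++ x :: (w :: d) = p := by rw [← hcd]; simp
  have e2 : c' ++ x :: (w' :: d') = p := by rw [← hcd']; simp
  have hnd2 : (c ++ x :: (w :: d)).Nodup := by rw [e1]; exact hnd
  obtain ⟨_, h⟩ := nodup_split_unique c c' hnd2 (by rw [e1, e2])
  exact (List.cons_eq_cons.mp h).1

theorem sigmaV_partition (hxt : x ≠ t) :
    G.sigmaV s t x =
      ∑ w ∈ (Set.toFinite {w | x ∈ G.pred s w}).toFinset, G.sigmaE s t x w := by
  classical
  have hSfin : ∀ Q : Set (List V), Q ⊆ G.SP s t → Q.Finite :=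
    fun Q h => (G.SP_finite s t).subset h
  have hS : {p ∈ G.SP s t | x ∈ p}.Finite := hSfin _ (Set.sep_subset _ _)
  have hE : ∀ w, {p ∈ G.SP s t | [x, w] <:+: p}.Finite :=
    fun w => hSfin _ (Set.sep_subset _ _)
  rw [sigmaV, Set.ncard_eq_toFinset_card _ hS]
  have hset : hS.toFinset =
      (Set.toFinite {w | x ∈ G.pred s w}).toFinset.biUnion (fun w => (hE w).toFinset) := by
    ext p
    simp only [Set.Finite.mem_toFinset, Finset.mem_biUnion, Set.mem_setOf_eq,
      Set.mem_sep_iff]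
    constructor
    · rintro ⟨hp, hxp⟩
      obtain ⟨w, hw, hinf⟩ := succ_exists hxt hp hxp
      exact ⟨w, hw, hp, hinf⟩
    · rintro ⟨w, _, hp, hinf⟩
      exact ⟨hp, hinf.subset (by simp)⟩
  rw [hset, Finset.card_biUnion]
  · apply Finset.sum_congr rfl
    intro w _
    rw [sigmaE, Set.ncard_eq_toFinset_card _ (hE w)]
  · intro w hw w' hw' hne
    simp only [Finset.disjoint_left, Set.Finite.mem_toFinset, Set.mem_sep_iff]
    rintro p ⟨hp, h1⟩ ⟨_, h2⟩
    exact hne (succ_unique hp.1.2.2.2 h1 h2)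

/-! ### Claim C : per-target recursion -/

theorem claimC (s t x : V) (hxt : t ≠ x) :
    (G.sigmaV s t x : ℝ) / (G.sigma s t : ℝ) =
      ∑ w ∈ (Set.toFinite {w | x ∈ G.pred s w}).toFinset,
        (G.sigma s x : ℝ) / (G.sigma s w : ℝ) *
          (if t = w then 1 else (G.sigmaV s t w : ℝ) / (G.sigma s t : ℝ)) := by
  classical
  by_cases hst : G.sigma s t = 0
  · have hempty : G.SP s t = ∅ := (Set.ncard_eq_zero (G.SP_finite s t)).mp hst
    have hV : G.sigmaV s t x = 0 := by
      rw [sigmaV]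
      convert Set.ncard_empty (List V)
      rw [hempty]
      ext p; simp
    rw [hV, hst]
    simp only [Nat.cast_zero, zero_div]
    symm
    apply Finset.sum_eq_zero
    intro w hw
    rw [Set.Finite.mem_toFinset, Set.mem_setOf_eq] at hw
    by_cases htw : t = w
    · exfalso
      subst htw
      exact (sigma_ne_zero_iff.mpr hw.2.2) hst
    · have : G.sigmaV s t w = 0 := by
        rw [sigmaV]
        convert Set.ncard_empty (List V)
        rw [hempty]
        ext p; simp
      rw [if_neg htw, this]
      simp
  · rw [sigmaV_partition (G := G) (Ne.symm hxt), Nat.cast_sum, Finset.sum_div]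
    apply Finset.sum_congr rfl
    intro w hw
    rw [Set.Finite.mem_toFinset, Set.mem_setOf_eq] at hw
    by_cases htw : t = w
    · subst htw
      rw [if_pos rfl, mul_one, sigmaE, B1_count hw]
    · rw [if_neg htw]
      have hB2 := B2 hw (Ne.symm htw)
      have hsw : (G.sigma s w : ℝ) ≠ 0 := Nat.cast_ne_zero.mpr (pred_sigma_ne_zero' hw)
      have hstR : (G.sigma s t : ℝ) ≠ 0 := Nat.cast_ne_zero.mpr hst
      have hB2R : (G.sigma s w : ℝ) * (G.sigmaE s t x w : ℝ)
          = (G.sigma s x : ℝ) * (G.sigmaV s t w : ℝ) := by exact_mod_cast hB2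
      field_simp
      nlinarith [hB2R]


end Aux

/-- For every `s, x ∈ V` with `x ≠ s`:
`Δ_{s•}(x) = Σ_{w : x ∈ P_s(w), w ∈ T(s)} (σ_{sx}/σ_{sw})·(1 + Δ_{s•}(w))
           + Σ_{w : x ∈ P_s(w), w ∉ T(s)} (σ_{sx}/σ_{sw})·Δ_{s•}(w)`. -/
theorem Delta_recursion (G G' : WDigraph V) (u v : V)
    (h : IsUpdate G G' u v) (s x : V) (hxs : x ≠ s) :
    Delta G G' s x =
      (∑ᶠ w ∈ {w : V | x ∈ G.pred s w ∧ w ∈ affT G G' s},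
        (G.sigma s x : ℝ) / (G.sigma s w : ℝ) * (1 + Delta G G' s w)) +
      ∑ᶠ w ∈ {w : V | x ∈ G.pred s w ∧ w ∉ affT G G' s},
        (G.sigma s x : ℝ) / (G.sigma s w : ℝ) * Delta G G' s w := by
  classical
  have hA : {t : V | t ∈ affT G G' s ∧ t ≠ x}.Finite := Set.toFinite _
  have hB : (affT G G' s).Finite := Set.toFinite _
  have hP : {w : V | x ∈ G.pred s w}.Finite := Set.toFinite _
  have hW1 : {w : V | x ∈ G.pred s w ∧ w ∈ affT G G' s}.Finite := Set.toFinite _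
  have hW2 : {w : V | x ∈ G.pred s w ∧ w ∉ affT G G' s}.Finite := Set.toFinite _
  set F : V → V → ℝ :=
    fun w t => if t = w then 1 else (G.sigmaV s t w : ℝ) / (G.sigma s t : ℝ) with hF
  set g : V → ℝ := fun w => (G.sigma s x : ℝ) / (G.sigma s w : ℝ) with hg
  -- Delta as finite sums
  have hDelta : ∀ y : V, Delta G G' s y =
      ∑ t ∈ (Set.toFinite {t : V | t ∈ affT G G' s ∧ t ≠ y}).toFinset,
        (G.sigmaV s t y : ℝ) / (G.sigma s t : ℝ) := by
    intro y
    rw [Delta, finsum_mem_eq_finite_toFinset_sum _ (Set.toFinite _)]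
  -- the key reorganization for each predecessor w
  have key : ∀ w, x ∈ G.pred s w →
      (∑ t ∈ hA.toFinset, F w t) =
        Delta G G' s w + (if w ∈ affT G G' s then 1 else 0) := by
    intro w hw
    have hwx : w ≠ x := pred_ne hw
    have hAB : hA.toFinset = hB.toFinset.erase x := by
      ext t
      simp only [Set.Finite.mem_toFinset, Set.mem_setOf_eq, Finset.mem_erase]
      tauto
    have hAwB : (Set.toFinite {t : V | t ∈ affT G G' s ∧ t ≠ w}).toFinset
        = hB.toFinset.erase w := by
      ext t
      simp only [Set.Finite.mem_toFinset, Set.mem_setOf_eq, Finset.mem_erase]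
      tauto
    have hFx : F w x = 0 := by
      rw [hF]
      simp only [if_neg (Ne.symm hwx)]
      rw [sigmaV_eq_zero hw]
      simp
    have h1 : ∑ t ∈ hA.toFinset, F w t = ∑ t ∈ hB.toFinset, F w t := by
      rw [hAB]
      by_cases hxB : x ∈ hB.toFinset
      · rw [← Finset.add_sum_erase _ _ hxB, hFx, zero_add]
      · rw [Finset.erase_eq_of_notMem hxB]
    have h2 : ∑ t ∈ hB.toFinset.erase w, F w t = Delta G G' s w := by
      rw [hDelta w, hAwB]
      apply Finset.sum_congr rfl
      intro t ht
      rw [hF]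
      simp only [if_neg (Finset.ne_of_mem_erase ht)]
    rw [h1]
    by_cases hwB : w ∈ affT G G' s
    · have hwB' : w ∈ hB.toFinset := by rwa [Set.Finite.mem_toFinset]
      rw [← Finset.add_sum_erase _ _ hwB', h2, hF]
      simp [hwB]
      ring
    · have hwB' : w ∉ hB.toFinset := by rwa [Set.Finite.mem_toFinset]
      rw [← Finset.erase_eq_of_notMem hwB', h2]
      simp [hwB]
  -- main computation
  have main : Delta G G' s x = ∑ w ∈ hP.toFinset, g w * (∑ t ∈ hA.toFinset, F w t) := by
    rw [hDelta x]
    have hstep : ∀ t ∈ hA.toFinset,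
        (G.sigmaV s t x : ℝ) / (G.sigma s t : ℝ) = ∑ w ∈ hP.toFinset, g w * F w t := by
      intro t ht
      rw [Set.Finite.mem_toFinset] at ht
      exact claimC s t x ht.2
    rw [Finset.sum_congr rfl hstep, Finset.sum_comm]
    apply Finset.sum_congr rfl
    intro w _
    rw [Finset.mul_sum]
  rw [main]
  have hsplit : ∀ w ∈ hP.toFinset, g w * (∑ t ∈ hA.toFinset, F w t)
      = g w * (Delta G G' s w + (if w ∈ affT G G' s then 1 else 0)) := by
    intro w hw
    rw [Set.Finite.mem_toFinset] at hw
    rw [key w hw]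
  rw [Finset.sum_congr rfl hsplit]
  -- split the sum over P into affected and unaffected successors
  rw [← Finset.sum_filter_add_sum_filter_not hP.toFinset (fun w => w ∈ affT G G' s)]
  have hw1eq : hP.toFinset.filter (fun w => w ∈ affT G G' s) = hW1.toFinset := by
    ext w
    simp only [Finset.mem_filter, Set.Finite.mem_toFinset, Set.mem_setOf_eq]
  have hw2eq : hP.toFinset.filter (fun w => w ∉ affT G G' s) = hW2.toFinset := by
    ext w
    simp only [Finset.mem_filter, Set.Finite.mem_toFinset, Set.mem_setOf_eq]
  rw [hw1eq, hw2eq,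
    finsum_mem_eq_finite_toFinset_sum _ hW1, finsum_mem_eq_finite_toFinset_sum _ hW2]
  congr 1
  · apply Finset.sum_congr rfl
    intro w hw
    rw [Set.Finite.mem_toFinset] at hw
    simp only [if_pos hw.2]
    ring
  · apply Finset.sum_congr rfl
    intro w hw
    rw [Set.Finite.mem_toFinset] at hw
    simp only [if_neg hw.2]
    ring


end WDigraph
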